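/- Let f : G → H be a group homomorphism, P_G and P_H submonoids closed under conjugation in G and H respectively with f(P_G) ⊆ P_H, and suppose the kernel K = ker(f) satisfies K ⊆ P_G (i.e., the morphism of preordered groups (f, f̄) has kernel in the torsion subcategory of groups with total preorder, with K ∩ P_G = K). If moreover f and its restriction f̄ : P_G → P_H are both surjective, then the induced map on quotients G/N_G → H/N_H is an isomorphism, where N_G and N_H are the unit groups of P_G and P_H. -/
import Mathlib


/-- If `(f, f̄)` is a normal epimorphism of preordered groups (both `f` and
its restriction to the cones are surjective) whose kernel has total preorder
(`ker f ⊆ P_G`), then the induced map `G ⧸ N_G → H ⧸ N_H` is an isomorphism. -/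
theorem stmt_9 (G H : Type*) [AddGroup G] [AddGroup H]
    (P : AddSubmonoid G) (Q : AddSubmonoid H)
    (hconjG : ∀ g : G, ∀ p ∈ P, g + p - g ∈ P)
    (hconjH : ∀ h : H, ∀ q ∈ Q, h + q - h ∈ Q)
    (f : G →+ H) (hcone : ∀ p ∈ P, f p ∈ Q)
    (hker : ∀ x : G, f x = 0 → x ∈ P)
    (hsurj : Function.Surjective f)
    (hconesurj : ∀ q ∈ Q, ∃ p ∈ P, f p = q)
    (NG : AddSubgroup G) [NG.Normal] (hNG : ∀ x : G, x ∈ NG ↔ x ∈ P ∧ -x ∈ P)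
    (NH : AddSubgroup H) [NH.Normal] (hNH : ∀ y : H, y ∈ NH ↔ y ∈ Q ∧ -y ∈ Q) :
    ∃ hle : NG ≤ NH.comap f,
      Function.Bijective (QuotientAddGroup.map NG NH f hle) := by
  have hle : NG ≤ NH.comap f := by
    intro x hx
    rw [hNG] at hx
    simp only [AddSubgroup.mem_comap, hNH, ← map_neg]
    exact ⟨hcone _ hx.1, hcone _ hx.2⟩
  refine ⟨hle, ?_, ?_⟩
  · -- injective
    have key : ∀ x : G, f x ∈ NH → x ∈ NG := by
      intro x hx
      rw [hNH] at hx
      obtain ⟨p, hp, hfp⟩ := hconesurj _ hx.1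
      obtain ⟨p', hp', hfp'⟩ := hconesurj _ hx.2
      have h1 : x - p ∈ P := hker _ (by simp [hfp])
      have h2 : -x - p' ∈ P := hker _ (by simp [hfp'])
      rw [hNG]
      constructor
      · have := P.add_mem h1 hp; simpa using this
      · have := P.add_mem h2 hp'; simpa using this
    rw [injective_iff_map_eq_zero]
    intro a ha
    obtain ⟨x, rfl⟩ := QuotientAddGroup.mk_surjective a
    rw [QuotientAddGroup.map_mk, QuotientAddGroup.eq_zero_iff] at ha
    rw [QuotientAddGroup.eq_zero_iff]
    exact key x ha
  · intro b
    obtain ⟨y, rfl⟩ := QuotientAddGroup.mk_surjective b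
    obtain ⟨x, rfl⟩ := hsurj y
    exact ⟨QuotientAddGroup.mk x, rfl⟩
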